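/- arXiv:1910.13821 — 2 statements merged into one kernel-verified Lean document; each statement's English description precedes it below -/
import Mathlib

section
/- Suppose q(r) = Λ^H G a(r) satisfies q(r_j) = φ_j for r_j ∈ S and ‖q(r)‖₂ < 1 strictly for r ∉ S. If X̂ = ∑_{r_j ∈ Ŝ} ĉ_j a(r_j) φ̂_j^H with ĉ_j > 0, ‖φ̂_j‖₂ = 1, satisfies G X̂ = G X and Ŝ ⊄ S (i.e., Ŝ contains a point not in S), then ∑_j ĉ_j > ‖X‖_A, where ‖X‖_A = ∑_{r_j∈S} c_j. -/
open Finset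

/-- The atom `a(r) φᴴ ∈ ℂ^{n×R}`. -/
noncomputable def atomMatrix {n R : ℕ} (a : ℝ × ℝ → Fin n → ℂ) (r : ℝ × ℝ)
    (φ : EuclideanSpace ℂ (Fin R)) : Matrix (Fin n) (Fin R) ℂ :=
  Matrix.of fun i k => a r i * star (φ k)

lemma key_sum {L n R t : ℕ}
    (a : ℝ × ℝ → Fin n → ℂ) (G : Matrix (Fin L) (Fin n) ℂ)
    (Λ : Matrix (Fin L) (Fin R) ℂ)
    (q : ℝ × ℝ → EuclideanSpace ℂ (Fin R))
    (hq : ∀ ρ, ∀ m, q ρ m = ∑ p : Fin L, star (Λ p m) * (G.mulVec (a ρ)) p)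
    (c0 : Fin t → ℝ) (r0 : Fin t → ℝ × ℝ) (φ0 : Fin t → EuclideanSpace ℂ (Fin R)) :
    ∑ p, ∑ k, star (Λ p k) * ((G * ∑ j, (c0 j : ℂ) • atomMatrix a (r0 j) (φ0 j)) p k)
      = ∑ j, (c0 j : ℂ) * (inner ℂ (φ0 j) (q (r0 j)) : ℂ) := by
  have hentry : ∀ p k, (G * ∑ j, (c0 j : ℂ) • atomMatrix a (r0 j) (φ0 j)) p k
      = ∑ j, (c0 j : ℂ) * (star (φ0 j k) * (G.mulVec (a (r0 j))) p) := by
    intro p k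
    simp only [Matrix.mul_apply, Matrix.sum_apply, Matrix.smul_apply, atomMatrix,
      Matrix.of_apply, Matrix.mulVec, dotProduct, Finset.mul_sum, Finset.sum_mul,
      smul_eq_mul]
    rw [Finset.sum_comm]
    refine Finset.sum_congr rfl fun j _ => ?_
    refine Finset.sum_congr rfl fun i _ => ?_
    ring
  calc ∑ p, ∑ k, star (Λ p k) * ((G * ∑ j, (c0 j : ℂ) • atomMatrix a (r0 j) (φ0 j)) p k)
      = ∑ j, (c0 j : ℂ) * ∑ k, star (φ0 j k) * ∑ p, star (Λ p k) * (G.mulVec (a (r0 j))) p := by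
        have rearr : ∀ (f : Fin L → Fin R → Fin t → ℂ),
            ∑ p, ∑ k, ∑ j, f p k j = ∑ j, ∑ k, ∑ p, f p k j := by
          intro f
          calc ∑ p, ∑ k, ∑ j, f p k j
              = ∑ k, ∑ p, ∑ j, f p k j := Finset.sum_comm
            _ = ∑ k, ∑ j, ∑ p, f p k j :=
                Finset.sum_congr rfl fun k _ => Finset.sum_comm
            _ = ∑ j, ∑ k, ∑ p, f p k j := Finset.sum_comm
        simp only [hentry, Finset.mul_sum]
        rw [rearr fun p k j => star (Λ p k) * ((c0 j : ℂ) * (star (φ0 j k) * G.mulVec (a (r0 j)) p))]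
        refine Finset.sum_congr rfl fun j _ => ?_
        refine Finset.sum_congr rfl fun k _ => ?_
        refine Finset.sum_congr rfl fun p _ => ?_
        ring
    _ = ∑ j, (c0 j : ℂ) * (inner ℂ (φ0 j) (q (r0 j)) : ℂ) := by
        refine Finset.sum_congr rfl fun j _ => ?_
        congr 1
        rw [PiLp.inner_apply]
        refine Finset.sum_congr rfl fun k _ => ?_
        rw [hq, RCLike.inner_apply]
        exact mul_comm _ _

/-- uniqueness part of the dual certificate argument.  If the vector
dual polynomial `q(ρ) = Λᴴ G a(ρ)` interpolates the signs on `S = {r_1,…,r_s}` and is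
strictly bounded by one off `S`, then any competing decomposition
`X' = ∑ c'_j a(r'_j) φ'_jᴴ` with `G X' = G X` whose support contains a point outside `S`
has strictly larger atomic cost: `∑ c'_j > ∑ c_j = ‖X‖_A`. -/
theorem competing_decomposition_strictly_larger {L n R s s' : ℕ}
    (a : ℝ × ℝ → Fin n → ℂ) (G : Matrix (Fin L) (Fin n) ℂ)
    (Λ : Matrix (Fin L) (Fin R) ℂ)
    (c : Fin s → ℝ) (r : Fin s → ℝ × ℝ) (φ : Fin s → EuclideanSpace ℂ (Fin R))
    (hc : ∀ j, 0 < c j) (hφ : ∀ j, ‖φ j‖ = 1)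
    (X : Matrix (Fin n) (Fin R) ℂ)
    (hX : X = ∑ j, (c j : ℂ) • atomMatrix a (r j) (φ j))
    (q : ℝ × ℝ → EuclideanSpace ℂ (Fin R))
    (hq : ∀ ρ, ∀ m, q ρ m = ∑ p : Fin L, star (Λ p m) * (G.mulVec (a ρ)) p)
    (hinterp : ∀ j, q (r j) = φ j)
    (hboundoff : ∀ ρ, ρ ∉ Set.range r → ‖q ρ‖ < 1)
    (c' : Fin s' → ℝ) (r' : Fin s' → ℝ × ℝ) (φ' : Fin s' → EuclideanSpace ℂ (Fin R))
    (hc' : ∀ j, 0 < c' j) (hφ' : ∀ j, ‖φ' j‖ = 1)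
    (X' : Matrix (Fin n) (Fin R) ℂ)
    (hX' : X' = ∑ j, (c' j : ℂ) • atomMatrix a (r' j) (φ' j))
    (hfeas : G * X' = G * X)
    (hoff : ∃ j, r' j ∉ Set.range r) :
    ∑ j, c j < ∑ j, c' j := by
  obtain ⟨j0, hj0⟩ := hoff
  -- norm bound on q everywhere
  have hqle : ∀ ρ, ‖q ρ‖ ≤ 1 := by
    intro ρ
    by_cases h : ρ ∈ Set.range r
    · obtain ⟨j, rfl⟩ := h
      rw [hinterp, hφ]
    · exact le_of_lt (hboundoff ρ h)
  have hkey : ∑ p, ∑ k, star (Λ p k) * ((G * X') p k)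
      = ∑ p, ∑ k, star (Λ p k) * ((G * X) p k) := by rw [hfeas]
  rw [hX, key_sum a G Λ q hq c r φ, hX', key_sum a G Λ q hq c' r' φ'] at hkey
  have e1 : (∑ j, (c j : ℂ) * (inner ℂ (φ j) (q (r j)) : ℂ)).re = ∑ j, c j := by
    have h1 : ∀ j, (inner ℂ (φ j) (q (r j)) : ℂ) = 1 := by
      intro j
      rw [hinterp, inner_self_eq_norm_sq_to_K, hφ]
      norm_num
    simp only [h1, mul_one]
    rw [Complex.re_sum]
    simp
  have e2 : (∑ j, (c' j : ℂ) * (inner ℂ (φ' j) (q (r' j)) : ℂ)).re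
      = ∑ j, c' j * (inner ℂ (φ' j) (q (r' j)) : ℂ).re := by
    rw [Complex.re_sum]
    refine Finset.sum_congr rfl fun j _ => ?_
    simp [Complex.mul_re, Complex.ofReal_re, Complex.ofReal_im]
  have hre : ∀ j, ((inner ℂ (φ' j) (q (r' j)) : ℂ)).re ≤ ‖q (r' j)‖ := by
    intro j
    calc ((inner ℂ (φ' j) (q (r' j)) : ℂ)).re ≤ ‖φ' j‖ * ‖q (r' j)‖ := by
          have := re_inner_le_norm (𝕜 := ℂ) (φ' j) (q (r' j))
          simpa [RCLike.re_to_complex] using this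
      _ = ‖q (r' j)‖ := by rw [hφ', one_mul]
  have := hkey
  have hsum : ∑ j, c j = ∑ j, c' j * (inner ℂ (φ' j) (q (r' j)) : ℂ).re := by
    rw [← e1, ← e2, hkey]
  rw [hsum]
  refine Finset.sum_lt_sum (fun j _ => ?_) ⟨j0, Finset.mem_univ j0, ?_⟩
  · calc c' j * (inner ℂ (φ' j) (q (r' j)) : ℂ).re ≤ c' j * 1 := by
          refine mul_le_mul_of_nonneg_left ?_ (le_of_lt (hc' j))
          exact le_trans (hre j) (hqle _)
      _ = c' j := mul_one _
  · calc c' j0 * (inner ℂ (φ' j0) (q (r' j0)) : ℂ).re < c' j0 * 1 := by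
          refine mul_lt_mul_of_pos_left ?_ (hc' j0)
          exact lt_of_le_of_lt (hre j0) (hboundoff _ hj0)
      _ = c' j0 := mul_one _
end

section
/- Let p(t) = ∑_{k=-N}^{N} c_k e^{i2πkt} be a trigonometric polynomial of degree N with complex coefficients. Then for all real t, |p'(t)| ≤ 2πN sup_s |p(s)|. -/
open Real Finset

open Complex in

noncomputable def wf (n j : ℕ) : ℂ := Complex.exp (π * Complex.I * (2*j+1) / (2*n))

lemma wf_ne_zero (n j : ℕ) : wf n j ≠ 0 := Complex.exp_ne_zero _

lemma piI_ne : (π:ℂ) * Complex.I ≠ 0 :=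
  mul_ne_zero (Complex.ofReal_ne_zero.2 Real.pi_ne_zero) Complex.I_ne_zero

lemma wf_ne_one (n j : ℕ) (hn : 0 < n) : wf n j ≠ 1 := by
  rw [wf, Ne, Complex.exp_eq_one_iff]
  rintro ⟨m, hm⟩
  have hn' : ((n : ℂ)) ≠ 0 := Nat.cast_ne_zero.2 (by omega)
  field_simp at hm
  have h2 : (π:ℂ) * Complex.I * (2*(j:ℂ)+1) = (π:ℂ) * Complex.I * ((4*m*n : ℤ):ℂ) := by
    push_cast; linear_combination (π*Complex.I) * hm
  have h3 : (2*(j:ℤ)+1) = 4*m*n := by exact_mod_cast mul_left_cancel₀ piI_ne h2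
  obtain ⟨k, hk⟩ : ∃ k : ℤ, 2*(j:ℤ)+1 = 4*k := ⟨m*n, by linarith⟩
  omega

lemma wf_pow (n j : ℕ) (hn : 0 < n) : wf n j ^ (2*n) = -1 := by
  rw [wf, ← Complex.exp_nat_mul]
  have hn' : ((n : ℂ)) ≠ 0 := Nat.cast_ne_zero.2 (by omega)
  have h1 : ((2*n : ℕ):ℂ) * (π * Complex.I * (2*j+1) / (2*n)) = ((2*j+1 : ℕ):ℤ) * (π * Complex.I) := by
    push_cast; field_simp
  rw [h1, Complex.exp_int_mul, Complex.exp_pi_mul_I, zpow_natCast]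
  exact Odd.neg_one_pow ⟨j, by omega⟩

-- power sums
lemma wf_pow_sum (n i : ℕ) (hn : 0 < n) (hi : 0 < i) (hi2 : i < 2*n) :
    ∑ j ∈ range (2*n), wf n j ^ i = 0 := by
  have hn' : ((n : ℂ)) ≠ 0 := Nat.cast_ne_zero.2 (by omega)
  have hterm : ∀ j, wf n j ^ i =
      Complex.exp (π * Complex.I * i / (2*n)) * Complex.exp (π * Complex.I * i / n) ^ j := by
    intro j
    rw [wf, ← Complex.exp_nat_mul, ← Complex.exp_nat_mul, ← Complex.exp_add]
    congr 1
    field_simp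
    ring
  simp only [hterm]
  rw [← Finset.mul_sum]
  have hr1 : Complex.exp (π * Complex.I * i / n) ≠ 1 := by
    rw [Ne, Complex.exp_eq_one_iff]
    rintro ⟨m, hm⟩
    field_simp at hm
    have h2 : (π:ℂ) * Complex.I * (i:ℂ) = (π:ℂ) * Complex.I * ((2*m*n : ℤ):ℂ) := by
      push_cast; linear_combination (π*Complex.I) * hm
    have h3 : ((i:ℤ)) = 2*m*n := by exact_mod_cast mul_left_cancel₀ piI_ne h2
    have hnz : (0:ℤ) < n := by exact_mod_cast hn
    have hiz : (0:ℤ) < i := by exact_mod_cast hi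
    have hiz2 : (i:ℤ) < 2*n := by exact_mod_cast hi2
    have hm1 : 1 ≤ m := by nlinarith
    nlinarith
  rw [geom_sum_eq hr1]
  have hnum : Complex.exp (π * Complex.I * i / n) ^ (2*n) = 1 := by
    rw [← Complex.exp_nat_mul]
    have h1 : ((2*n : ℕ):ℂ) * (π * Complex.I * i / n) = (i:ℤ) * (2 * π * Complex.I) := by
      push_cast; field_simp
    rw [h1, Complex.exp_int_mul_two_pi_mul_I]
  rw [hnum]
  simp

lemma wf_reflect (n j : ℕ) (hn : 0 < n) (hj : j < 2*n) :
    wf n (2*n - 1 - j) = (wf n j)⁻¹ := by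
  rw [wf, wf, ← Complex.exp_neg, Complex.exp_eq_exp_iff_exists_int]
  refine ⟨1, ?_⟩
  have hn' : ((n : ℂ)) ≠ 0 := Nat.cast_ne_zero.2 (by omega)
  have hr : ((2*n - 1 - j : ℕ):ℂ) = 2*(n:ℂ) - 1 - j := by
    have : (2*n - 1 - j) + (j + 1) = 2*n := by omega
    have := congrArg (fun m : ℕ => (m:ℂ)) this
    push_cast at this
    linear_combination this
  rw [hr]
  field_simp
  ring
noncomputable def Tn (n m : ℕ) : ℂ := ∑ j ∈ range (2*n), wf n j ^ m / (wf n j - 1)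
noncomputable def Sn (n m : ℕ) : ℂ := ∑ j ∈ range (2*n), wf n j ^ m / (wf n j - 1)^2

lemma wf_inv_sub_ne (n j : ℕ) (hn : 0 < n) : (wf n j)⁻¹ - 1 ≠ 0 := by
  have h0 := wf_ne_zero n j
  have h1 := wf_ne_one n j hn
  intro h
  apply h1
  have : (wf n j)⁻¹ = 1 := by linear_combination h
  field_simp at this
  exact this.symm

lemma Tn_zero (n : ℕ) (hn : 0 < n) : Tn n 0 = -n := by
  have key : ∀ j ∈ range (2*n), (1:ℂ) / (wf n j - 1) + 1 / ((wf n j)⁻¹ - 1) = -1 := by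
    intro j _
    have h0 := wf_ne_zero n j
    have h1 := sub_ne_zero.2 (wf_ne_one n j hn)
    have h2 := wf_inv_sub_ne n j hn
    have h1' : (1:ℂ) - wf n j ≠ 0 := fun h => h1 (by linear_combination -h)
    field_simp
    ring
  have hrefl : ∑ j ∈ range (2*n), (1:ℂ)/(wf n j - 1)
      = ∑ j ∈ range (2*n), (1:ℂ)/((wf n j)⁻¹ - 1) := by
    rw [← Finset.sum_range_reflect]
    exact Finset.sum_congr rfl fun j hj => by rw [wf_reflect n j hn (mem_range.1 hj)]
  have hsum : (∑ j ∈ range (2*n), (1:ℂ)/(wf n j - 1)) + (∑ j ∈ range (2*n), (1:ℂ)/(wf n j - 1))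
      = -(2*(n:ℂ)) := by
    nth_rewrite 2 [hrefl]
    rw [← Finset.sum_add_distrib, Finset.sum_congr rfl key, Finset.sum_const, card_range]
    push_cast; ring
  simp only [Tn, pow_zero]
  linear_combination hsum / 2

lemma Tn_succ (n m : ℕ) (hn : 0 < n) :
    Tn n (m+1) = Tn n m + ∑ j ∈ range (2*n), wf n j ^ m := by
  rw [Tn, Tn, ← Finset.sum_add_distrib]
  refine Finset.sum_congr rfl fun j _ => ?_
  have h1 := sub_ne_zero.2 (wf_ne_one n j hn)
  field_simp
  ring

lemma Tn_const (n m : ℕ) (hn : 0 < n) (h1 : 1 ≤ m) (h2 : m ≤ 2*n) : Tn n m = n := by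
  induction m with
  | zero => omega
  | succ k ih =>
    rcases Nat.eq_or_lt_of_le h1 with h | h
    · have hk : k = 0 := by omega
      subst hk
      rw [Tn_succ n 0 hn, Tn_zero n hn]
      simp only [pow_zero, Finset.sum_const, card_range, nsmul_eq_mul, mul_one]
      push_cast; ring
    · rw [Tn_succ n k hn, ih (by omega) (by omega), wf_pow_sum n k hn (by omega) (by omega), add_zero]

lemma Sn_succ (n m : ℕ) (hn : 0 < n) : Sn n (m+1) = Sn n m + Tn n m := by
  rw [Sn, Sn, Tn, ← Finset.sum_add_distrib]
  refine Finset.sum_congr rfl fun j _ => ?_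
  have h1 := sub_ne_zero.2 (wf_ne_one n j hn)
  field_simp
  ring

lemma Sn_one_add (n i : ℕ) (hn : 0 < n) (hi : i ≤ 2*n) : Sn n (1+i) = Sn n 1 + i * n := by
  induction i with
  | zero => simp
  | succ k ih =>
    have h : 1 + (k+1) = (1+k) + 1 := by omega
    rw [h, Sn_succ n (1+k) hn, ih (by omega), Tn_const n (1+k) hn (by omega) (by omega)]
    push_cast; ring

lemma Sn_one (n : ℕ) (hn : 0 < n) : Sn n 1 = -(n:ℂ)^2 := by
  have h1 := Sn_one_add n (2*n) hn le_rfl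
  have h2 : Sn n (1 + 2*n) = -Sn n 1 := by
    rw [Sn, Sn, ← Finset.sum_neg_distrib]
    refine Finset.sum_congr rfl fun j _ => ?_
    rw [pow_add, pow_one, wf_pow n j hn]
    ring
  rw [h2] at h1
  push_cast at h1
  linear_combination -h1 / 2

lemma Sn_formula (n m : ℕ) (hn : 0 < n) (h1 : 1 ≤ m) (h2 : m ≤ 2*n+1) :
    Sn n m = n * ((m:ℂ) - n - 1) := by
  obtain ⟨i, rfl⟩ : ∃ i, m = 1 + i := ⟨m - 1, by omega⟩
  rw [Sn_one_add n i hn (by omega), Sn_one n hn]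
  push_cast; ring

noncomputable def mu (n j : ℕ) : ℂ := (2*π*Complex.I/n) * wf n j ^ (n+1) / (wf n j - 1)^2

-- (A') interpolation of the derivative multiplier
lemma mu_sum (n : ℕ) (hn : 0 < n) (k : ℤ) (hk1 : -(n:ℤ) ≤ k) (hk2 : k ≤ n) :
    ∑ j ∈ range (2*n), mu n j * wf n j ^ k = 2*π*Complex.I*k := by
  have hn' : ((n : ℂ)) ≠ 0 := Nat.cast_ne_zero.2 (by omega)
  set m : ℕ := (n+1+k).toNat with hm
  have hmz : ((n:ℤ)+1+k) = (m:ℤ) := by omega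
  have hterm : ∀ j ∈ range (2*n), mu n j * wf n j ^ k
      = (2*π*Complex.I/n) * (wf n j ^ m / (wf n j - 1)^2) := by
    intro j _
    have h0 := wf_ne_zero n j
    have h1 := sub_ne_zero.2 (wf_ne_one n j hn)
    have : wf n j ^ ((n:ℤ)+1+k) = wf n j ^ (m:ℤ) := by rw [hmz]
    rw [zpow_add₀ h0, zpow_natCast] at this
    have hnat : wf n j ^ ((n:ℤ)+1) = wf n j ^ (n+1) := by
      rw [← zpow_natCast]; norm_cast
    rw [hnat] at this
    rw [mu]
    field_simp
    linear_combination this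
  rw [Finset.sum_congr rfl hterm, ← Finset.mul_sum, ← Sn,
    Sn_formula n m hn (by omega) (by omega)]
  have hmc : (m:ℂ) = (n:ℂ) + 1 + (k:ℂ) := by exact_mod_cast congrArg (fun z : ℤ => (z:ℂ)) hmz.symm
  rw [hmc]
  field_simp
  ring

noncomputable def uu (n j : ℕ) : ℝ := (2*j+1)/(4*n)

lemma wf_zpow_eq (n j : ℕ) (hn : 0 < n) (k : ℤ) :
    wf n j ^ k = Complex.exp (Complex.I * (2*π*k*(uu n j : ℝ))) := by
  rw [wf, ← Complex.exp_int_mul]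
  congr 1
  have hn' : ((n : ℂ)) ≠ 0 := Nat.cast_ne_zero.2 (by omega)
  rw [uu]
  push_cast
  field_simp
  ring

-- derivative of p
lemma p_hasDeriv (N : ℕ) (c : ℤ → ℂ) (t : ℝ) :
    HasDerivAt (fun s : ℝ =>
        ∑ k ∈ Finset.Icc (-(N : ℤ)) (N : ℤ), c k * Complex.exp (Complex.I * (2 * π * k * s)))
      (∑ k ∈ Finset.Icc (-(N : ℤ)) (N : ℤ),
        c k * (Complex.I * (2 * π * k)) * Complex.exp (Complex.I * (2 * π * k * t))) t := by
  apply HasDerivAt.fun_sum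
  intro k _
  have h0 : HasDerivAt (fun z : ℂ => c k * Complex.exp (Complex.I * (2 * π * k * z)))
      (c k * (Complex.I * (2 * π * k)) * Complex.exp (Complex.I * (2 * π * k * t))) (t:ℂ) := by
    have h1 : HasDerivAt (fun z : ℂ => Complex.I * (2 * π * k * z))
        (Complex.I * (2 * π * k)) (t:ℂ) := by
      simpa using (((hasDerivAt_id ((t:ℝ):ℂ)).const_mul ((2:ℂ) * π * k)).const_mul Complex.I)
    have h2 := (h1.cexp).const_mul (c k)
    exact h2.congr_deriv (by ring)
  exact h0.comp_ofReal

-- Riesz interpolation formula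
lemma riesz (N : ℕ) (hN : 0 < N) (c : ℤ → ℂ) (t : ℝ) :
    (∑ k ∈ Finset.Icc (-(N : ℤ)) (N : ℤ),
        c k * (Complex.I * (2 * π * k)) * Complex.exp (Complex.I * (2 * π * k * t)))
    = ∑ j ∈ range (2*N), mu N j *
        ∑ k ∈ Finset.Icc (-(N : ℤ)) (N : ℤ), c k * Complex.exp (Complex.I * (2 * π * k * ((t + uu N j : ℝ) : ℂ))) := by
  have hterm : ∀ j ∈ range (2*N), mu N j *
      (∑ k ∈ Finset.Icc (-(N : ℤ)) (N : ℤ), c k * Complex.exp (Complex.I * (2 * π * k * ((t + uu N j : ℝ) : ℂ))))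
      = ∑ k ∈ Finset.Icc (-(N : ℤ)) (N : ℤ),
          c k * Complex.exp (Complex.I * (2 * π * k * t)) * (mu N j * wf N j ^ (k:ℤ)) := by
    intro j _
    rw [Finset.mul_sum]
    refine Finset.sum_congr rfl fun k _ => ?_
    rw [wf_zpow_eq N j hN k]
    rw [show Complex.exp (Complex.I * (2 * π * k * ((t + uu N j : ℝ) : ℂ)))
        = Complex.exp (Complex.I * (2 * π * k * t)) * Complex.exp (Complex.I * (2 * π * k * (uu N j : ℝ)))
        by rw [← Complex.exp_add]; congr 1; push_cast; ring]
    ring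
  rw [Finset.sum_congr rfl hterm, Finset.sum_comm]
  refine Finset.sum_congr rfl fun k hk => ?_
  rw [← Finset.mul_sum, mu_sum N hN k (Finset.mem_Icc.1 hk).1 (Finset.mem_Icc.1 hk).2]
  ring

lemma wf_conj (n j : ℕ) : (starRingEnd ℂ) (wf n j) = (wf n j)⁻¹ := by
  rw [wf, ← Complex.exp_conj, ← Complex.exp_neg]
  congr 1
  simp [map_div₀, map_ofNat]
  ring

lemma abs_mu_sq (n j : ℕ) (hn : 0 < n) :
    ((1 / norm (wf n j - 1)^2 : ℝ) : ℂ) = -(wf n j) / (wf n j - 1)^2 := by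
  have h0 := wf_ne_zero n j
  have h1 := sub_ne_zero.2 (wf_ne_one n j hn)
  have h2 : ((norm (wf n j - 1)^2 : ℝ) : ℂ) = (wf n j - 1) * ((wf n j)⁻¹ - 1) := by
    rw [← Complex.normSq_eq_norm_sq, ← Complex.mul_conj]
    rw [map_sub, wf_conj, map_one]
  push_cast
  rw [show ((norm (wf n j - 1) : ℝ) : ℂ)^2 = ((norm (wf n j - 1)^2 : ℝ) : ℂ)
      by push_cast; ring, h2]
  have h3 := wf_inv_sub_ne n j hn
  rw [div_eq_div_iff (mul_ne_zero h1 h3) (pow_ne_zero 2 h1)]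
  field_simp
  ring

lemma abs_wf (n j : ℕ) : norm (wf n j) = 1 := by
  rw [wf, show (π : ℂ) * Complex.I * (2*j+1) / (2*n) = ((π*(2*j+1)/(2*n) : ℝ) : ℂ) * Complex.I
    by push_cast; ring]
  exact Complex.norm_exp_ofReal_mul_I _

lemma abs_mu (n j : ℕ) (hn : 0 < n) :
    norm (mu n j) = (2*π/n) * (1 / norm (wf n j - 1)^2) := by
  rw [mu, norm_div, norm_mul, norm_div, norm_pow, abs_wf, norm_pow]
  rw [norm_mul, norm_mul, Complex.norm_I, Complex.norm_real, Real.norm_eq_abs, Complex.norm_two, Complex.norm_natCast]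
  rw [_root_.abs_of_nonneg Real.pi_pos.le]
  ring

lemma mu_abs_sum (n : ℕ) (hn : 0 < n) :
    ∑ j ∈ range (2*n), norm (mu n j) = 2*π*n := by
  have hn' : ((n : ℝ)) ≠ 0 := Nat.cast_ne_zero.2 (by omega)
  have hs : ∑ j ∈ range (2*n), (1 / norm (wf n j - 1)^2 : ℝ) = n^2 := by
    have hc : ∑ j ∈ range (2*n), -(wf n j)/(wf n j - 1)^2 = ((n:ℂ))^2 := by
      have h4 : ∑ j ∈ range (2*n), -(wf n j)/(wf n j - 1)^2 = -Sn n 1 := by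
        rw [Sn, ← Finset.sum_neg_distrib]
        exact Finset.sum_congr rfl fun j _ => by rw [pow_one]; ring
      rw [h4, Sn_formula n 1 hn le_rfl (by omega)]
      push_cast; ring
    have hc2 : ((∑ j ∈ range (2*n), (1 / norm (wf n j - 1)^2 : ℝ)) : ℂ) = (n:ℂ)^2 := by
      push_cast
      rw [← hc]
      refine Finset.sum_congr rfl fun j _ => ?_
      have h5 := abs_mu_sq n j hn
      push_cast at h5
      exact h5
    exact_mod_cast hc2
  rw [Finset.sum_congr rfl (fun j _ => abs_mu n j hn), ← Finset.mul_sum, hs]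
  field_simp


/-- Bernstein's inequality for trigonometric polynomials.  If
`p(t) = ∑_{k=-N}^{N} c_k e^{i2πkt}`, then `|p'(t)| ≤ 2πN · sup_s |p(s)|`. -/
theorem bernstein_trig_poly (N : ℕ) (c : ℤ → ℂ) (t : ℝ) :
    norm (deriv (fun s : ℝ =>
        ∑ k ∈ Finset.Icc (-(N : ℤ)) (N : ℤ), c k * Complex.exp (Complex.I * (2 * π * k * s))) t) ≤
      2 * π * N * ⨆ s : ℝ, norm
        (∑ k ∈ Finset.Icc (-(N : ℤ)) (N : ℤ), c k * Complex.exp (Complex.I * (2 * π * k * s))) := by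
  rcases Nat.eq_zero_or_pos N with h0 | hN
  · subst h0
    have hfun : (fun s : ℝ => ∑ k ∈ Finset.Icc (-((0:ℕ) : ℤ)) ((0:ℕ) : ℤ),
        c k * Complex.exp (Complex.I * (2 * π * k * s))) = fun _ => c 0 := by
      funext s
      simp
    rw [hfun, deriv_const]
    simp
  · have habsexp : ∀ (k : ℤ) (x : ℝ),
        norm (Complex.exp (Complex.I * (2 * π * k * x))) = 1 := by
      intro k x
      rw [show Complex.I * (2 * (π:ℂ) * k * x) = ((2*π*k*x : ℝ) : ℂ) * Complex.I
        by push_cast; ring]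
      exact Complex.norm_exp_ofReal_mul_I _
    have bdd : BddAbove (Set.range fun s : ℝ => norm
        (∑ k ∈ Finset.Icc (-(N : ℤ)) (N : ℤ), c k * Complex.exp (Complex.I * (2 * π * k * s)))) := by
      refine ⟨∑ k ∈ Finset.Icc (-(N : ℤ)) (N : ℤ), norm (c k), ?_⟩
      rintro x ⟨s, rfl⟩
      refine le_trans (norm_sum_le _ _) (Finset.sum_le_sum fun k _ => ?_)
      rw [norm_mul, habsexp k s, mul_one]
    have hle : ∀ x : ℝ, norm
        (∑ k ∈ Finset.Icc (-(N : ℤ)) (N : ℤ), c k * Complex.exp (Complex.I * (2 * π * k * x)))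
        ≤ ⨆ s : ℝ, norm
        (∑ k ∈ Finset.Icc (-(N : ℤ)) (N : ℤ), c k * Complex.exp (Complex.I * (2 * π * k * s))) :=
      fun x => le_ciSup bdd x
    rw [(p_hasDeriv N c t).deriv, riesz N hN c t]
    calc norm (∑ j ∈ range (2*N), mu N j *
            ∑ k ∈ Finset.Icc (-(N : ℤ)) (N : ℤ),
              c k * Complex.exp (Complex.I * (2 * π * k * ((t + uu N j : ℝ) : ℂ))))
        ≤ ∑ j ∈ range (2*N), norm (mu N j *
            ∑ k ∈ Finset.Icc (-(N : ℤ)) (N : ℤ),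
              c k * Complex.exp (Complex.I * (2 * π * k * ((t + uu N j : ℝ) : ℂ)))) :=
          norm_sum_le _ _
      _ ≤ ∑ j ∈ range (2*N), norm (mu N j) *
            (⨆ s : ℝ, norm (∑ k ∈ Finset.Icc (-(N : ℤ)) (N : ℤ),
              c k * Complex.exp (Complex.I * (2 * π * k * s)))) := by
          refine Finset.sum_le_sum fun j _ => ?_
          rw [norm_mul]
          exact mul_le_mul_of_nonneg_left (hle (t + uu N j)) (norm_nonneg _)
      _ = 2 * π * N * ⨆ s : ℝ, norm
            (∑ k ∈ Finset.Icc (-(N : ℤ)) (N : ℤ),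
              c k * Complex.exp (Complex.I * (2 * π * k * s))) := by
          rw [← Finset.sum_mul, mu_abs_sum N hN]
end
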